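/- arXiv:2404.06525 — 2 statements merged into one kernel-verified Lean document; each statement's English description precedes it below -/
import Mathlib

section
/- Let 𝐇 be an invertible s×s Hermitian complex matrix, let 𝐒 : U → Matrix(s,s,ℂ) be a function on an open set U ⊆ ℂ^{n−s} with 𝐒(ζ)ᵀ = 𝐒(ζ) for all ζ, and assume all the inverses below exist on U. Define H(ζ) := 𝐇·(Id − conj(𝐒(ζ))·𝐇ᵀ·𝐒(ζ)·𝐇)⁻¹ and S(ζ) := 𝐇ᵀ·(Id − 𝐒(ζ)·𝐇·conj(𝐒(ζ))·𝐇ᵀ)⁻¹·𝐒(ζ)·𝐇, and let M := {(w,z,ζ) : Re(w) = zᵀ·H(ζ)·conj(z) + Re(conj(z)ᵀ·S(ζ)·conj(z))}. Fix a ∈ ℂˢ, b ∈ ℝ, t ∈ ℝ, and set B(ζ) := a − 𝐒(ζ)·𝐇·conj(a). Then the map Φ_t(w,z,ζ) := (w + 2bit + 2t·conj(a)ᵀ·𝐇ᵀ·z + t²·conj(a)ᵀ·𝐇ᵀ·B(ζ), z + t·B(ζ), ζ) maps M into M. -/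
open Matrix
set_option maxHeartbeats 1000000

private lemma tk_unit_comm {s : ℕ} (X Y : Matrix (Fin s) (Fin s) ℂ)
    (h : IsUnit (1 - X * Y)) : IsUnit (1 - Y * X) := by
  rw [Matrix.isUnit_iff_isUnit_det] at h ⊢
  have hd : (1 - X * Y).det = (1 - Y * X).det := by
    have := Matrix.det_one_add_mul_comm (-X) Y
    simpa [sub_eq_add_neg] using this
  rwa [hd] at h

private lemma tk_push {s : ℕ} (X Y : Matrix (Fin s) (Fin s) ℂ)
    (h : IsUnit (1 - Y * X)) : X * (1 - Y * X)⁻¹ = (1 - X * Y)⁻¹ * X := by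
  have h2 : IsUnit (1 - X * Y) := tk_unit_comm Y X h
  have hd1 := (Matrix.isUnit_iff_isUnit_det _).mp h
  have hd2 := (Matrix.isUnit_iff_isUnit_det _).mp h2
  have key : (1 - X * Y) * X = X * (1 - Y * X) := by noncomm_ring
  have e1 : (1 - X * Y) * (X * (1 - Y * X)⁻¹) = X := by
    rw [← mul_assoc, key, mul_assoc, Matrix.mul_nonsing_inv _ hd1, mul_one]
  calc X * (1 - Y * X)⁻¹
      = (1 - X * Y)⁻¹ * ((1 - X * Y) * (X * (1 - Y * X)⁻¹)) := by
        rw [← mul_assoc, Matrix.nonsing_inv_mul _ hd2, one_mul]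
    _ = (1 - X * Y)⁻¹ * X := by rw [e1]

private lemma tk_map_inv {s : ℕ} (A : Matrix (Fin s) (Fin s) ℂ) (h : IsUnit A.det) :
    (A⁻¹).map (starRingEnd ℂ) = (A.map (starRingEnd ℂ))⁻¹ := by
  symm
  apply Matrix.inv_eq_right_inv
  rw [← Matrix.map_mul, Matrix.mul_nonsing_inv _ h,
    Matrix.map_one _ (map_zero _) (map_one _)]

private lemma tk_star_mulVec {s : ℕ} (M : Matrix (Fin s) (Fin s) ℂ) (v : Fin s → ℂ) :
    star (M.mulVec v) = (M.map (starRingEnd ℂ)).mulVec (star v) := by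
  ext i
  simp [Matrix.mulVec, dotProduct, map_sum]

private lemma tk_conj_dot {s : ℕ} (M : Matrix (Fin s) (Fin s) ℂ) (x y : Fin s → ℂ) :
    starRingEnd ℂ (x ⬝ᵥ M.mulVec y) = star x ⬝ᵥ (M.map (starRingEnd ℂ)).mulVec (star y) := by
  simp [Matrix.mulVec, dotProduct, map_sum]

private lemma tk_swap_dot {s : ℕ} (M : Matrix (Fin s) (Fin s) ℂ) (x y : Fin s → ℂ) :
    x ⬝ᵥ M.mulVec y = y ⬝ᵥ Mᵀ.mulVec x := by
  rw [dotProduct_mulVec, dotProduct_comm, ← mulVec_transpose]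

private lemma tk_re (u : ℂ) : ((u.re : ℝ) : ℂ) = (u + (starRingEnd ℂ) u) / 2 := by
  rw [Complex.add_conj]
  push_cast
  ring

/-- The time-`t` flow of the infinitesimal symmetry
`X = 2(bi + conj(a)ᵀ𝐇ᵀz)∂/∂w + (aᵀ − conj(a)ᵀ𝐇ᵀS(ζ))∂/∂z` maps the normalized
2-nondegenerate model into itself. -/
theorem transkernel_symmetry_flow {s m : ℕ} (H0 : Matrix (Fin s) (Fin s) ℂ)
    (hHerm : H0.IsHermitian) (hH : IsUnit H0)
    (U : Set (Fin m → ℂ)) (hU : IsOpen U)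
    (S : (Fin m → ℂ) → Matrix (Fin s) (Fin s) ℂ)
    (hSsym : ∀ ζ ∈ U, (S ζ)ᵀ = S ζ)
    (hinv1 : ∀ ζ ∈ U, IsUnit (1 - (S ζ).map (starRingEnd ℂ) * H0ᵀ * S ζ * H0))
    (hinv2 : ∀ ζ ∈ U, IsUnit (1 - S ζ * H0 * (S ζ).map (starRingEnd ℂ) * H0ᵀ))
    (a : Fin s → ℂ) (b t : ℝ) :
    Set.MapsTo
      (fun p : ℂ × (Fin s → ℂ) × (Fin m → ℂ) =>
        (p.1 + 2 * (b : ℂ) * Complex.I * (t : ℂ)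
            + 2 * (t : ℂ) * (star a ⬝ᵥ H0ᵀ.mulVec p.2.1)
            + (t : ℂ) ^ 2 *
              (star a ⬝ᵥ H0ᵀ.mulVec (a - (S p.2.2 * H0).mulVec (star a))),
          p.2.1 + (t : ℂ) • (a - (S p.2.2 * H0).mulVec (star a)),
          p.2.2))
      {p : ℂ × (Fin s → ℂ) × (Fin m → ℂ) | p.2.2 ∈ U ∧
        ((p.1.re : ℝ) : ℂ)
          = p.2.1 ⬝ᵥ (H0 * (1 - (S p.2.2).map (starRingEnd ℂ) * H0ᵀ * S p.2.2 * H0)⁻¹).mulVec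
              (star p.2.1)
            + (((star p.2.1 ⬝ᵥ (H0ᵀ * (1 - S p.2.2 * H0 * (S p.2.2).map (starRingEnd ℂ) * H0ᵀ)⁻¹
                  * S p.2.2 * H0).mulVec (star p.2.1)).re : ℝ) : ℂ)}
      {p : ℂ × (Fin s → ℂ) × (Fin m → ℂ) | p.2.2 ∈ U ∧
        ((p.1.re : ℝ) : ℂ)
          = p.2.1 ⬝ᵥ (H0 * (1 - (S p.2.2).map (starRingEnd ℂ) * H0ᵀ * S p.2.2 * H0)⁻¹).mulVec
              (star p.2.1)
            + (((star p.2.1 ⬝ᵥ (H0ᵀ * (1 - S p.2.2 * H0 * (S p.2.2).map (starRingEnd ℂ) * H0ᵀ)⁻¹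
                  * S p.2.2 * H0).mulVec (star p.2.1)).re : ℝ) : ℂ)} := by
  rintro ⟨w, z, ζ⟩ ⟨hζ, heq⟩
  simp only [Set.mem_setOf_eq] at heq ⊢
  refine ⟨hζ, ?_⟩
  set Sm := S ζ with hSm
  set Sc := Sm.map (starRingEnd ℂ) with hSc
  set A := (1 : Matrix (Fin s) (Fin s) ℂ) - Sc * H0ᵀ * Sm * H0 with hA
  set B2 := (1 : Matrix (Fin s) (Fin s) ℂ) - Sm * H0 * Sc * H0ᵀ with hB2
  set K := H0 * A⁻¹ with hK
  set T := H0ᵀ * B2⁻¹ * Sm * H0 with hT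
  set Bv := a - (Sm * H0).mulVec (star a) with hBv
  have hu1 : IsUnit A.det := (Matrix.isUnit_iff_isUnit_det A).mp (hinv1 ζ hζ)
  have hu2 : IsUnit B2.det := (Matrix.isUnit_iff_isUnit_det B2).mp (hinv2 ζ hζ)
  clear_value Sm Sc A B2 K T Bv
  have hH0c : H0.map (starRingEnd ℂ) = H0ᵀ := by
    ext i j
    simpa [Matrix.map_apply] using hHerm.apply j i
  have hH0Tc : H0ᵀ.map (starRingEnd ℂ) = H0 := by
    rw [Matrix.transpose_map, hH0c, Matrix.transpose_transpose]
  have hSmT : Smᵀ = Sm := by rw [hSm]; exact hSsym ζ hζ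
  have hinv2' : IsUnit (1 - Sm * H0 * Sc * H0ᵀ) := by
    rw [hSc, hSm]; exact hinv2 ζ hζ
  have hScT : Scᵀ = Sc := by rw [hSc, ← Matrix.transpose_map, hSmT]
  have hScc : Sc.map (starRingEnd ℂ) = Sm := by
    ext i j; simp [hSc, Matrix.map_apply]
  have hmsub : ∀ (M N : Matrix (Fin s) (Fin s) ℂ),
      (M - N).map (starRingEnd ℂ) = M.map (starRingEnd ℂ) - N.map (starRingEnd ℂ) :=
    Matrix.map_sub _ (fun x y => map_sub _ x y)
  have hone : (1 : Matrix (Fin s) (Fin s) ℂ).map (starRingEnd ℂ) = 1 :=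
    Matrix.map_one _ (map_zero _) (map_one _)
  have hAc : A.map (starRingEnd ℂ) = B2 := by
    rw [hA, hB2, hmsub, hone, Matrix.map_mul, Matrix.map_mul, Matrix.map_mul,
      hScc, hH0Tc, ← hSc, hH0c]
  have hB2c : B2.map (starRingEnd ℂ) = A := by
    rw [hA, hB2, hmsub, hone, Matrix.map_mul, Matrix.map_mul, Matrix.map_mul,
      hScc, hH0Tc, ← hSc, hH0c]
  -- K is Hermitian
  have hKc : K.map (starRingEnd ℂ) = H0ᵀ * B2⁻¹ := by
    rw [hK, Matrix.map_mul, tk_map_inv A hu1, hAc, hH0c]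
  have hKT : Kᵀ = H0ᵀ * B2⁻¹ := by
    have hp := tk_push H0ᵀ (Sm * H0 * Sc) hinv2'
    have hAT : Aᵀ = 1 - H0ᵀ * (Sm * H0 * Sc) := by
      rw [hA]
      simp only [Matrix.transpose_sub, Matrix.transpose_one, Matrix.transpose_mul,
        hSmT, hScT, Matrix.transpose_transpose]
      noncomm_ring
    calc Kᵀ = (Aᵀ)⁻¹ * H0ᵀ := by rw [hK, Matrix.transpose_mul, Matrix.transpose_nonsing_inv]
      _ = H0ᵀ * B2⁻¹ := by rw [hAT, ← hp, hB2]
  have hKherm : K.map (starRingEnd ℂ) = Kᵀ := by rw [hKc, hKT]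
  -- T is symmetric
  have hTT : Tᵀ = T := by
    have hpu2 : IsUnit (1 - H0 * Sc * H0ᵀ * Sm) := by
      have h := hinv2' 
      rw [show (1 : Matrix (Fin s) (Fin s) ℂ) - Sm * H0 * Sc * H0ᵀ
          = 1 - Sm * (H0 * Sc * H0ᵀ) by noncomm_ring] at h
      have h2 := tk_unit_comm Sm (H0 * Sc * H0ᵀ) h
      rwa [show (1 : Matrix (Fin s) (Fin s) ℂ) - H0 * Sc * H0ᵀ * Sm
          = 1 - H0 * Sc * H0ᵀ * Sm from rfl] at h2
    have hp2 := tk_push Sm (H0 * Sc * H0ᵀ) hpu2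
    rw [show (1 : Matrix (Fin s) (Fin s) ℂ) - Sm * (H0 * Sc * H0ᵀ) = B2 by
      rw [hB2]; noncomm_ring] at hp2
    have hB2T : B2ᵀ = 1 - H0 * Sc * H0ᵀ * Sm := by
      rw [hB2]
      simp only [Matrix.transpose_sub, Matrix.transpose_one, Matrix.transpose_mul,
        hSmT, hScT, Matrix.transpose_transpose]
      noncomm_ring
    calc Tᵀ = H0ᵀ * ((Sm * (B2ᵀ)⁻¹) * H0) := by
          rw [hT]
          simp only [Matrix.transpose_mul, Matrix.transpose_nonsing_inv, hSmT,
            Matrix.transpose_transpose]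
          noncomm_ring
      _ = H0ᵀ * ((B2⁻¹ * Sm) * H0) := by rw [hB2T, hp2]
      _ = T := by rw [hT]; noncomm_ring
  -- conj of T
  have hTc : T.map (starRingEnd ℂ) = K * Sc * H0ᵀ := by
    rw [hT, Matrix.map_mul, Matrix.map_mul, Matrix.map_mul, tk_map_inv B2 hu2,
      hB2c, hH0Tc, ← hSc, hH0c, hK]
  have hKA : K * A = H0 := by rw [hK, mul_assoc, Matrix.nonsing_inv_mul A hu1, mul_one]
  have hsB : star Bv = star a - (Sc * H0ᵀ).mulVec a := by
    rw [hBv, star_sub, tk_star_mulVec, star_star, Matrix.map_mul, ← hSc, hH0c]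
  have e0 : K - K * (Sc * H0ᵀ) * (Sm * H0) = H0 := by
    conv_rhs => rw [← hKA]
    rw [hA, mul_sub, mul_one]
    simp only [mul_assoc]
  have keyv : K.mulVec (star Bv) + (K * Sc * H0ᵀ).mulVec Bv = H0.mulVec (star a) := by
    rw [hsB, hBv]
    conv_rhs => rw [← e0]
    simp only [Matrix.mulVec_sub, Matrix.sub_mulVec, Matrix.mulVec_mulVec, mul_assoc]
    abel
  -- scalar identities
  have hq1 : starRingEnd ℂ (z ⬝ᵥ K *ᵥ star Bv) = Bv ⬝ᵥ K *ᵥ star z := by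
    rw [tk_conj_dot, star_star, hKherm, ← tk_swap_dot]
  have hq2 : starRingEnd ℂ (Bv ⬝ᵥ K *ᵥ star Bv) = Bv ⬝ᵥ K *ᵥ star Bv := by
    rw [tk_conj_dot, star_star, hKherm, ← tk_swap_dot]
  have hr : star z ⬝ᵥ T *ᵥ star Bv = star Bv ⬝ᵥ T *ᵥ star z := by
    rw [tk_swap_dot, hTT]
  have hrc := congrArg (starRingEnd ℂ) hr
  have h1 := congrArg (fun v => z ⬝ᵥ v) keyv
  simp only [dotProduct_add] at h1
  have h2 : z ⬝ᵥ (K * Sc * H0ᵀ) *ᵥ Bv = starRingEnd ℂ (star z ⬝ᵥ T *ᵥ star Bv) := by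
    rw [tk_conj_dot]; simp only [star_star]; rw [hTc]
  have hk1 : star a ⬝ᵥ H0ᵀ *ᵥ z
      = z ⬝ᵥ K *ᵥ star Bv + starRingEnd ℂ (star z ⬝ᵥ T *ᵥ star Bv) := by
    rw [← tk_swap_dot, ← h2, h1]
  have h1b := congrArg (fun v => Bv ⬝ᵥ v) keyv
  simp only [dotProduct_add] at h1b
  have h2b : Bv ⬝ᵥ (K * Sc * H0ᵀ) *ᵥ Bv = starRingEnd ℂ (star Bv ⬝ᵥ T *ᵥ star Bv) := by
    rw [tk_conj_dot]; simp only [star_star]; rw [hTc]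
  have hk2 : star a ⬝ᵥ H0ᵀ *ᵥ Bv
      = Bv ⬝ᵥ K *ᵥ star Bv + starRingEnd ℂ (star Bv ⬝ᵥ T *ᵥ star Bv) := by
    rw [← tk_swap_dot, ← h2b, h1b]
  have hk1' : starRingEnd ℂ (star a ⬝ᵥ H0ᵀ *ᵥ z)
      = Bv ⬝ᵥ K *ᵥ star z + star Bv ⬝ᵥ T *ᵥ star z := by
    rw [hk1, map_add, hq1, Complex.conj_conj, hr]
  have hk2' : starRingEnd ℂ (star a ⬝ᵥ H0ᵀ *ᵥ Bv)
      = Bv ⬝ᵥ K *ᵥ star Bv + star Bv ⬝ᵥ T *ᵥ star Bv := by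
    rw [hk2, map_add, hq2, Complex.conj_conj]
  have hz' : star (z + (t : ℂ) • Bv) = star z + (t : ℂ) • star Bv := by
    rw [star_add, star_smul]
    norm_num [Complex.star_def, Complex.conj_ofReal]
  have hexp1 : (z + (t : ℂ) • Bv) ⬝ᵥ K *ᵥ star (z + (t : ℂ) • Bv)
      = z ⬝ᵥ K *ᵥ star z + (t : ℂ) * (z ⬝ᵥ K *ᵥ star Bv) + (t : ℂ) * (Bv ⬝ᵥ K *ᵥ star z)
        + (t : ℂ) ^ 2 * (Bv ⬝ᵥ K *ᵥ star Bv) := by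
    rw [hz']
    simp only [Matrix.mulVec_add, Matrix.mulVec_smul, dotProduct_add, add_dotProduct,
      dotProduct_smul, smul_dotProduct, smul_eq_mul]
    ring
  have hexp2 : star (z + (t : ℂ) • Bv) ⬝ᵥ T *ᵥ star (z + (t : ℂ) • Bv)
      = star z ⬝ᵥ T *ᵥ star z + (t : ℂ) * (star z ⬝ᵥ T *ᵥ star Bv)
        + (t : ℂ) * (star Bv ⬝ᵥ T *ᵥ star z) + (t : ℂ) ^ 2 * (star Bv ⬝ᵥ T *ᵥ star Bv) := by
    rw [hz']
    simp only [Matrix.mulVec_add, Matrix.mulVec_smul, dotProduct_add, add_dotProduct,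
      dotProduct_smul, smul_dotProduct, smul_eq_mul]
    ring
  rw [hexp1, hexp2]
  simp only [tk_re] at heq ⊢
  simp only [map_add, _root_.map_mul, map_pow, Complex.conj_ofReal, Complex.conj_I, map_ofNat] at heq ⊢
  linear_combination heq + (t : ℂ) * hk1 + (t : ℂ) * hk1' + ((t : ℂ) ^ 2 / 2) * hk2
    + ((t : ℂ) ^ 2 / 2) * hk2' - ((t : ℂ) / 2) * hr + ((t : ℂ) / 2) * hrc
end

section
/- Let 𝐇 be an invertible s×s Hermitian complex matrix, h ∈ ℝ, and set a := −i·e^{ih} ∈ ℂ. Define the (2s+2)×(2s+2) complex matrix m with block form [[1/a, 0, 0, 0], [0, 0, i·(𝐇ᵀ)⁻¹, 0], [0, i·𝐇, 0, 0], [0, 0, 0, a]]. Then m·conj(m) = Id, and consequently the map σ : gl(2s+2,ℂ) → gl(2s+2,ℂ) given by σ(X) := m·conj(X)·m⁻¹ is an involution (σ∘σ = id) which satisfies σ([X,Y]) = [σ(X), σ(Y)] for all X, Y. -/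
open Matrix

/-- The matrix `m` with block form `[[1/a,0,0,0],[0,0,i(𝐇ᵀ)⁻¹,0],[0,i𝐇,0,0],[0,0,0,a]]`
where `a = −i e^{ih}`. -/
noncomputable def involMat {s : ℕ} (H0 : Matrix (Fin s) (Fin s) ℂ) (h : ℝ) :
    Matrix (Fin 1 ⊕ Fin s ⊕ Fin s ⊕ Fin 1) (Fin 1 ⊕ Fin s ⊕ Fin s ⊕ Fin 1) ℂ :=
  Matrix.of fun i j =>
    match i, j with
    | .inl _, .inl _ => (-Complex.I * Complex.exp ((h : ℂ) * Complex.I))⁻¹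
    | .inr (.inl p), .inr (.inr (.inl q)) => Complex.I * (H0ᵀ)⁻¹ p q
    | .inr (.inr (.inl p)), .inr (.inl q) => Complex.I * H0 p q
    | .inr (.inr (.inr _)), .inr (.inr (.inr _)) => -Complex.I * Complex.exp ((h : ℂ) * Complex.I)
    | _, _ => 0

set_option maxHeartbeats 1000000 in
lemma involMat_mul_conj {s : ℕ} (H0 : Matrix (Fin s) (Fin s) ℂ)
    (hHerm : H0.IsHermitian) (hH : IsUnit H0) (h : ℝ) :
    involMat H0 h * (involMat H0 h).map (starRingEnd ℂ) = 1 := by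
  have hdet : IsUnit H0.det := (Matrix.isUnit_iff_isUnit_det H0).mp hH
  have hmul : H0 * H0⁻¹ = 1 := Matrix.mul_nonsing_inv H0 hdet
  have hc : ∀ p q, (starRingEnd ℂ) (H0 p q) = H0 q p := by
    intro p q; conv_rhs => rw [← hHerm]
    simp [Matrix.conjTranspose_apply]
  have hinvHerm : (H0⁻¹).IsHermitian := hHerm.inv
  have hcInv : ∀ p q, (starRingEnd ℂ) (H0⁻¹ p q) = H0⁻¹ q p := by
    intro p q; conv_rhs => rw [← hinvHerm]
    simp [Matrix.conjTranspose_apply]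
  have ha : (-Complex.I * Complex.exp ((h : ℂ) * Complex.I)) *
      (starRingEnd ℂ) (-Complex.I * Complex.exp ((h : ℂ) * Complex.I)) = 1 := by
    rw [_root_.map_mul, ← Complex.exp_conj]
    have : (starRingEnd ℂ) ((h : ℂ) * Complex.I) = -((h:ℂ) * Complex.I) := by
      simp [Complex.conj_I]
    rw [this]
    rw [show (-Complex.I * Complex.exp ((h : ℂ) * Complex.I)) *
      ((starRingEnd ℂ) (-Complex.I) * Complex.exp (-((h:ℂ) * Complex.I))) =
      (-Complex.I * (starRingEnd ℂ) (-Complex.I)) *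
        (Complex.exp ((h : ℂ) * Complex.I) * Complex.exp (-((h:ℂ) * Complex.I))) by ring]
    rw [← Complex.exp_add]
    simp [Complex.conj_I, Complex.mul_conj]
  ext i j
  rcases i with i | i | i | i <;> rcases j with j | j | j | j <;>
    simp only [involMat, Matrix.mul_apply, Fintype.sum_sum_type, Matrix.map_apply,
      Matrix.of_apply, Matrix.one_apply, map_zero, mul_zero, zero_mul,
      Finset.sum_const_zero, add_zero, zero_add, Fin.sum_univ_one, _root_.map_mul]
  · simp only [Sum.inl.injEq, eq_iff_true_of_subsingleton, if_true]
    rw [map_inv₀, ← mul_inv, ha, inv_one]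
  · simp
  · simp
  · simp
  · simp
  · simp only [← Matrix.transpose_nonsing_inv, Matrix.transpose_apply, Complex.conj_I, hc]
    simp only [show ∀ a b : ℂ, Complex.I * a * (-Complex.I * b) = a * b from fun a b => by
      ring_nf; rw [Complex.I_sq]; ring]
    have : ∀ x, H0⁻¹ x i * H0 j x = H0 j x * H0⁻¹ x i := fun x => mul_comm _ _
    simp only [this]
    rw [← Matrix.mul_apply, hmul, Matrix.one_apply]
    simp [eq_comm]
  · simp
  · simp
  · simp
  · simp
  · simp only [← Matrix.transpose_nonsing_inv, Matrix.transpose_apply, Complex.conj_I, hcInv]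
    simp only [show ∀ a b : ℂ, Complex.I * a * (-Complex.I * b) = a * b from fun a b => by
      ring_nf; rw [Complex.I_sq]; ring]
    rw [← Matrix.mul_apply, hmul, Matrix.one_apply]
    simp
  · simp
  · simp
  · simp
  · simp
  · have ha' := ha
    simp only [_root_.map_mul, map_neg, Complex.conj_I] at ha'
    simp only [Sum.inr.injEq, eq_iff_true_of_subsingleton, if_true, map_neg, Complex.conj_I]
    linear_combination ha'

/-- `m·conj(m) = Id`, hence `σ(X) := m·conj(X)·m⁻¹` is an involution of `gl(2s+2,ℂ)`
respecting the commutator bracket. -/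
theorem involMat_involution {s : ℕ} (H0 : Matrix (Fin s) (Fin s) ℂ)
    (hHerm : H0.IsHermitian) (hH : IsUnit H0) (h : ℝ) :
    involMat H0 h * (involMat H0 h).map (starRingEnd ℂ) = 1
    ∧ (∀ X : Matrix (Fin 1 ⊕ Fin s ⊕ Fin s ⊕ Fin 1) (Fin 1 ⊕ Fin s ⊕ Fin s ⊕ Fin 1) ℂ,
        involMat H0 h * ((involMat H0 h * X.map (starRingEnd ℂ) * (involMat H0 h)⁻¹).map
            (starRingEnd ℂ)) * (involMat H0 h)⁻¹ = X)
    ∧ (∀ X Y : Matrix (Fin 1 ⊕ Fin s ⊕ Fin s ⊕ Fin 1) (Fin 1 ⊕ Fin s ⊕ Fin s ⊕ Fin 1) ℂ,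
        involMat H0 h * ((X * Y - Y * X).map (starRingEnd ℂ)) * (involMat H0 h)⁻¹
          = (involMat H0 h * X.map (starRingEnd ℂ) * (involMat H0 h)⁻¹)
              * (involMat H0 h * Y.map (starRingEnd ℂ) * (involMat H0 h)⁻¹)
            - (involMat H0 h * Y.map (starRingEnd ℂ) * (involMat H0 h)⁻¹)
              * (involMat H0 h * X.map (starRingEnd ℂ) * (involMat H0 h)⁻¹)) := by
  set M := involMat H0 h with hM
  set Mc := M.map (starRingEnd ℂ) with hMc
  have h1 : M * Mc = 1 := involMat_mul_conj H0 hHerm hH h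
  have h2 : Mc * M = 1 := mul_eq_one_comm.mp h1
  have hinv : M⁻¹ = Mc := Matrix.inv_eq_right_inv h1
  have hcc : ∀ A : Matrix (Fin 1 ⊕ Fin s ⊕ Fin s ⊕ Fin 1) (Fin 1 ⊕ Fin s ⊕ Fin s ⊕ Fin 1) ℂ,
      (A.map (starRingEnd ℂ)).map (starRingEnd ℂ) = A := by
    intro A; ext i j; simp
  have hMcc : Mc.map (starRingEnd ℂ) = M := hcc M
  refine ⟨h1, ?_, ?_⟩
  · intro X
    rw [hinv, Matrix.map_mul, Matrix.map_mul, hcc, hMcc]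
    calc M * (M.map (starRingEnd ℂ) * X * M) * Mc
        = (M * Mc) * X * (M * Mc) := by rw [← hMc]; noncomm_ring
      _ = X := by rw [h1, Matrix.one_mul, Matrix.mul_one]
  · intro X Y
    rw [hinv]
    have key : ∀ A B : Matrix (Fin 1 ⊕ Fin s ⊕ Fin s ⊕ Fin 1) (Fin 1 ⊕ Fin s ⊕ Fin s ⊕ Fin 1) ℂ,
        (M * A * Mc) * (M * B * Mc) = M * (A * B) * Mc := by
      intro A B
      calc (M * A * Mc) * (M * B * Mc) = M * (A * ((Mc * M) * (B * Mc))) := by noncomm_ring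
        _ = M * (A * B) * Mc := by rw [h2, Matrix.one_mul]; noncomm_ring
    rw [key, key, Matrix.map_sub, Matrix.map_mul, Matrix.map_mul,
      Matrix.mul_sub, Matrix.sub_mul]
    exact fun a b => map_sub _ a b
end
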